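/- For every real constant C > 0 there exist a positive integer n and an orthogonal projection p ∈ M_n(ℂ) with δ_p > 0 such that for every symmetry s ∈ M_n(ℂ) diagonal with respect to the standard basis, ‖p s p‖ ≥ C · δ_p. -/

import Mathlib

namespace PSP

abbrev G (t : ℕ) := (Fin t → ZMod 2) × (Fin t → ZMod 2)

variable {t : ℕ}

def B (a i : G t) : ZMod 2 := (∑ k, a.1 k * i.1 k) + (∑ k, a.2 k * i.2 k)

noncomputable def χ (a i : G t) : ℂ := (-1) ^ (B a i).val

lemma neg_one_pow_val_add (x y : ZMod 2) :
    ((-1 : ℂ)) ^ (x + y).val = (-1) ^ x.val * (-1) ^ y.val := by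
  rw [ZMod.val_add, ← pow_add]; exact (neg_one_pow_eq_pow_mod_two _).symm

lemma B_add_left (a b i : G t) : B (a + b) i = B a i + B b i := by
  simp only [B, Prod.fst_add, Prod.snd_add, Pi.add_apply, add_mul,
    Finset.sum_add_distrib]
  ring

lemma B_add_right (a i j : G t) : B a (i + j) = B a i + B a j := by
  simp only [B, Prod.fst_add, Prod.snd_add, Pi.add_apply, mul_add,
    Finset.sum_add_distrib]
  ring

lemma B_comm (a i : G t) : B a i = B i a := by
  simp only [B, mul_comm]

lemma χ_add_left (a b i : G t) : χ (a + b) i = χ a i * χ b i := by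
  rw [χ, B_add_left, neg_one_pow_val_add]; rfl

lemma χ_add_right (a i j : G t) : χ a (i + j) = χ a i * χ a j := by
  rw [χ, B_add_right, neg_one_pow_val_add]; rfl

lemma χ_comm (a i : G t) : χ a i = χ i a := by rw [χ, B_comm]; rfl

lemma χ_zero (i : G t) : χ 0 i = 1 := by
  have : B (0 : G t) i = 0 := by simp [B]
  rw [χ, this]; rfl

lemma g_add_self (a : G t) : a + a = 0 := by
  have h : ∀ x : ZMod 2, x + x = 0 := by decide
  ext k <;> simp [h]


lemma star_χ (a i : G t) : star (χ a i) = χ a i := by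
  rw [χ, star_pow, star_neg, star_one]

lemma χ_norm (a i : G t) : ‖χ a i‖ = 1 := by
  rw [χ, norm_pow, norm_neg, norm_one, one_pow]

lemma χ_mul_self (a i : G t) : χ a i * χ a i = 1 := by
  rw [← χ_add_left, g_add_self, χ_zero]


lemma zmod2_ne_zero {x : ZMod 2} (h : x ≠ 0) : x = 1 := by revert x h; decide

lemma exists_B_one {c : G t} (hc : c ≠ 0) : ∃ d : G t, B c d = 1 := by
  have h12 : c.1 ≠ 0 ∨ c.2 ≠ 0 := by
    by_contra h
    push_neg at h
    exact hc (Prod.ext h.1 h.2)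
  rcases h12 with h | h
  · obtain ⟨k, hk⟩ := Function.ne_iff.mp h
    refine ⟨(Pi.single k 1, 0), ?_⟩
    simp [B, Pi.single_apply, mul_ite, Finset.sum_ite_eq', zmod2_ne_zero hk]
  · obtain ⟨k, hk⟩ := Function.ne_iff.mp h
    refine ⟨(0, Pi.single k 1), ?_⟩
    simp [B, Pi.single_apply, mul_ite, Finset.sum_ite_eq', zmod2_ne_zero hk]

lemma sum_χ_eq_zero {c : G t} (hc : c ≠ 0) : ∑ i : G t, χ c i = 0 := by
  obtain ⟨d, hd⟩ := exists_B_one hc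
  have hχd : χ c d = -1 := by rw [χ, hd]; norm_num [show ZMod.val (1:ZMod 2) = 1 from rfl]
  have key : ∑ i : G t, χ c (i + d) = ∑ i : G t, χ c i :=
    Fintype.sum_equiv (Equiv.addRight d) _ _ (fun i => rfl)
  have key2 : ∑ i : G t, χ c (i + d) = -∑ i : G t, χ c i := by
    simp only [χ_add_right, hχd, mul_neg, mul_one, Finset.sum_neg_distrib]
  have h0 : ∑ i : G t, χ c i = -∑ i : G t, χ c i := key.symm.trans key2
  exact add_self_eq_zero.mp (add_eq_zero_iff_eq_neg.mpr h0)

lemma eq_of_add_eq_zero {a b : G t} (h : a + b = 0) : a = b := by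
  have : a + (b + b) = (a + b) + b := by ring
  rw [g_add_self b, h, zero_add, add_zero] at this
  exact this

lemma sum_χ_mul (a b : G t) :
    ∑ i : G t, χ a i * χ b i = if a = b then (Fintype.card (G t) : ℂ) else 0 := by
  simp only [← χ_add_left]
  by_cases h : a = b
  · subst h
    simp [g_add_self, χ_zero]
  · rw [if_neg h]
    apply sum_χ_eq_zero
    intro hab
    exact h (eq_of_add_eq_zero hab)

lemma sum_χ_mul' (i j : G t) :
    ∑ c : G t, χ c i * χ c j = if i = j then (Fintype.card (G t) : ℂ) else 0 := by
  calc ∑ c : G t, χ c i * χ c j = ∑ c : G t, χ i c * χ j c := by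
        simp_rw [χ_comm]
    _ = _ := sum_χ_mul i j


def SS (t : ℕ) : Finset (G t) := Finset.univ.filter (fun x => x.1 = 0 ∨ x.2 = 0)

noncomputable def p (t : ℕ) : Matrix (G t) (G t) ℂ :=
  fun i j => (Fintype.card (G t) : ℂ)⁻¹ * ∑ a ∈ SS t, χ a i * χ a j

lemma card_G : Fintype.card (G t) = 2 ^ t * 2 ^ t := by
  simp [Fintype.card_prod, Fintype.card_fun]

lemma card_G_pos : 0 < Fintype.card (G t) := Fintype.card_pos

lemma N_ne_zero : (Fintype.card (G t) : ℂ) ≠ 0 := by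
  exact_mod_cast Nat.cast_ne_zero.mpr card_G_pos.ne'

lemma p_herm : (p t).IsHermitian := by
  ext i j
  simp only [Matrix.conjTranspose_apply, p, star_mul', star_inv₀, star_natCast,
    star_sum, star_χ]
  congr 1
  exact Finset.sum_congr rfl fun a _ => mul_comm _ _

lemma p_mul_p : p t * p t = p t := by
  ext i j
  rw [Matrix.mul_apply]
  set c : ℂ := (Fintype.card (G t) : ℂ)⁻¹ with hc
  have expand : ∀ k, p t i k * p t k j
      = c * c * ∑ a ∈ SS t, ∑ b ∈ SS t,
          χ a i * χ b j * (χ a k * χ b k) := by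
    intro k
    rw [p, p, mul_mul_mul_comm, Finset.sum_mul_sum]
    congr 1
    refine Finset.sum_congr rfl fun a _ => Finset.sum_congr rfl fun b _ => by ring
  simp only [expand]
  rw [← Finset.mul_sum, Finset.sum_comm]
  have inner : ∀ a ∈ SS t, ∑ k : G t, ∑ b ∈ SS t, χ a i * χ b j * (χ a k * χ b k)
      = χ a i * χ a j * (Fintype.card (G t) : ℂ) := by
    intro a ha
    rw [Finset.sum_comm]
    have : ∀ b ∈ SS t, ∑ k : G t, χ a i * χ b j * (χ a k * χ b k)
        = χ a i * χ b j * (if a = b then (Fintype.card (G t) : ℂ) else 0) := by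
      intro b _
      rw [← Finset.mul_sum, sum_χ_mul]
    rw [Finset.sum_congr rfl this]
    simp only [mul_ite, mul_zero]
    rw [Finset.sum_ite_eq (SS t) a (fun b => χ a i * χ b j * (Fintype.card (G t) : ℂ)),
      if_pos ha]
  rw [Finset.sum_congr rfl inner, ← Finset.sum_mul, p]
  rw [mul_comm ((∑ a ∈ SS t, χ a i * χ a j)) ((Fintype.card (G t) : ℂ))]
  rw [← mul_assoc, mul_assoc (c*c)]
  have : c * c * ((Fintype.card (G t) : ℂ) * (∑ a ∈ SS t, χ a i * χ a j))
      = c * ∑ a ∈ SS t, χ a i * χ a j := by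
    rw [← mul_assoc, mul_assoc c c _, inv_mul_cancel₀ N_ne_zero, mul_one]
  rw [← mul_assoc] at this ⊢
  exact this

lemma p_diag (i : G t) :
    p t i i = ((SS t).card : ℂ) * (Fintype.card (G t) : ℂ)⁻¹ := by
  rw [p]
  simp only [χ_mul_self]
  rw [Finset.sum_const, nsmul_eq_mul, mul_one, mul_comm]


lemma zero_mem_SS : (0 : G t) ∈ SS t := by simp [SS]

lemma SS_card_pos : 0 < (SS t).card := Finset.card_pos.mpr ⟨0, zero_mem_SS⟩

lemma SS_card_le : (SS t).card ≤ 2 ^ (t + 1) := by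
  have h1 : (SS t) ⊆ Finset.univ.filter (fun x : G t => x.1 = 0)
      ∪ Finset.univ.filter (fun x : G t => x.2 = 0) := by
    intro x hx
    simp only [SS, Finset.mem_filter, Finset.mem_univ, true_and] at hx
    simp only [Finset.mem_union, Finset.mem_filter, Finset.mem_univ, true_and]
    exact hx
  have c1 : (Finset.univ.filter (fun x : G t => x.1 = 0)).card ≤ 2 ^ t := by
    have := Finset.card_le_card_of_injOn (f := Prod.snd)
      (s := Finset.univ.filter (fun x : G t => x.1 = 0)) (t := Finset.univ)
      (fun x _ => Finset.mem_univ _)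
      (by
        intro x hx y hy hxy
        simp only [Finset.coe_filter, Set.mem_setOf_eq] at hx hy
        exact Prod.ext (hx.2.trans hy.2.symm) hxy)
    simpa [Fintype.card_fun] using this
  have c2 : (Finset.univ.filter (fun x : G t => x.2 = 0)).card ≤ 2 ^ t := by
    have := Finset.card_le_card_of_injOn (f := Prod.fst)
      (s := Finset.univ.filter (fun x : G t => x.2 = 0)) (t := Finset.univ)
      (fun x _ => Finset.mem_univ _)
      (by
        intro x hx y hy hxy
        simp only [Finset.coe_filter, Set.mem_setOf_eq] at hx hy
        exact Prod.ext hxy (hx.2.trans hy.2.symm))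
    simpa [Fintype.card_fun] using this
  calc (SS t).card ≤ _ := Finset.card_le_card h1
    _ ≤ 2 ^ t + 2 ^ t := (Finset.card_union_le _ _).trans (by omega)
    _ = 2 ^ (t + 1) := by ring

section Symmetry

variable {s : Matrix (G t) (G t) ℂ}

noncomputable def F (s : Matrix (G t) (G t) ℂ) (c : G t) : ℂ :=
  (Fintype.card (G t) : ℂ)⁻¹ * ∑ j : G t, s j j * χ c j

lemma diag_star (hherm : s.IsHermitian) (j : G t) : star (s j j) = s j j := by
  conv_rhs => rw [← hherm]
  rfl

lemma diag_sq (hs : s * s = 1) (hdiag : s.IsDiag) (j : G t) : s j j * s j j = 1 := by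
  have h1 : (s * s) j j = 1 := by rw [hs]; simp [Matrix.one_apply]
  rw [Matrix.mul_apply] at h1
  rw [← h1]
  symm
  apply Finset.sum_eq_single j
  · intro k _ hk
    rw [hdiag (Ne.symm hk), zero_mul]
  · intro h; exact absurd (Finset.mem_univ j) h

lemma diag_mul_star (hherm : s.IsHermitian) (hs : s * s = 1) (hdiag : s.IsDiag)
    (j : G t) : s j j * star (s j j) = 1 := by
  rw [diag_star hherm, diag_sq hs hdiag]

lemma mv_p (a : G t) (ha : a ∈ SS t) : (p t).mulVec (χ a) = χ a := by
  funext i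
  rw [Matrix.mulVec, dotProduct]
  simp only [p]
  have step1 : ∑ j : G t, ((Fintype.card (G t) : ℂ)⁻¹ * ∑ b ∈ SS t, χ b i * χ b j) * χ a j
      = ∑ b ∈ SS t, (Fintype.card (G t) : ℂ)⁻¹ * χ b i * ∑ j : G t, χ b j * χ a j := by
    simp only [Finset.mul_sum, Finset.sum_mul]
    rw [Finset.sum_comm]
    exact Finset.sum_congr rfl fun b _ => Finset.sum_congr rfl fun j _ => by ring
  rw [step1]
  simp only [sum_χ_mul, mul_ite, mul_zero]
  rw [Finset.sum_ite_eq' (SS t) a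
    (fun b => (Fintype.card (G t) : ℂ)⁻¹ * χ b i * (Fintype.card (G t) : ℂ)), if_pos ha]
  field_simp

lemma mv_s (hdiag : s.IsDiag) (x : G t → ℂ) :
    s.mulVec x = fun j => s j j * x j := by
  funext j
  rw [Matrix.mulVec, dotProduct]
  apply Finset.sum_eq_single j
  · intro k _ hk
    rw [hdiag (Ne.symm hk), zero_mul]
  · intro h; exact absurd (Finset.mem_univ j) h

lemma w_eq (hdiag : s.IsDiag) (a : G t) (ha : a ∈ SS t) :
    (p t * s * p t).mulVec (χ a) = fun i => ∑ b ∈ SS t, F s (a + b) * χ b i := by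
  rw [← Matrix.mulVec_mulVec, ← Matrix.mulVec_mulVec, mv_p a ha, mv_s hdiag]
  funext i
  rw [Matrix.mulVec, dotProduct]
  simp only [p, F]
  have step1 : ∑ j : G t, ((Fintype.card (G t) : ℂ)⁻¹ * ∑ b ∈ SS t, χ b i * χ b j) * (s j j * χ a j)
      = ∑ b ∈ SS t, ((Fintype.card (G t) : ℂ)⁻¹ * ∑ j : G t, s j j * (χ a j * χ b j)) * χ b i := by
    simp only [Finset.mul_sum, Finset.sum_mul]
    rw [Finset.sum_comm]
    exact Finset.sum_congr rfl fun b _ => Finset.sum_congr rfl fun j _ => by ring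
  rw [step1]
  refine Finset.sum_congr rfl fun b _ => ?_
  congr 2
  exact Finset.sum_congr rfl fun j _ => by rw [χ_add_left]


lemma sum_mul_star (f : G t → ℂ) :
    ∑ i : G t, ((∑ b ∈ SS t, f b * χ b i) * star (∑ b ∈ SS t, f b * χ b i))
      = (Fintype.card (G t) : ℂ) * ∑ b ∈ SS t, f b * star (f b) := by
  simp only [star_sum, star_mul', star_χ]
  have expand : ∀ i : G t, (∑ b ∈ SS t, f b * χ b i) * (∑ b ∈ SS t, star (f b) * χ b i)
      = ∑ b ∈ SS t, ∑ b' ∈ SS t, f b * star (f b') * (χ b i * χ b' i) := by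
    intro i
    rw [Finset.sum_mul_sum]
    exact Finset.sum_congr rfl fun b _ => Finset.sum_congr rfl fun b' _ => by ring
  simp only [expand]
  rw [Finset.sum_comm]
  have inner : ∀ b ∈ SS t, ∑ i : G t, ∑ b' ∈ SS t, f b * star (f b') * (χ b i * χ b' i)
      = f b * star (f b) * (Fintype.card (G t) : ℂ) := by
    intro b hb
    rw [Finset.sum_comm]
    have : ∀ b' ∈ SS t, ∑ i : G t, f b * star (f b') * (χ b i * χ b' i)
        = f b * star (f b') * (if b = b' then (Fintype.card (G t) : ℂ) else 0) := by
      intro b' _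
      rw [← Finset.mul_sum, sum_χ_mul]
    rw [Finset.sum_congr rfl this]
    simp only [mul_ite, mul_zero]
    rw [Finset.sum_ite_eq (SS t) b (fun b' => f b * star (f b') * (Fintype.card (G t) : ℂ)),
      if_pos hb]
  rw [Finset.sum_congr rfl inner, ← Finset.sum_mul, mul_comm]

lemma sum_normSq_w (f : G t → ℂ) :
    ∑ i : G t, Complex.normSq (∑ b ∈ SS t, f b * χ b i)
      = (Fintype.card (G t) : ℝ) * ∑ b ∈ SS t, Complex.normSq (f b) := by
  have h := sum_mul_star (t := t) f
  have hl : ∀ z : ℂ, z * star z = (Complex.normSq z : ℂ) := fun z => by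
    rw [Complex.star_def, Complex.mul_conj]
  simp only [hl] at h
  exact_mod_cast h

lemma parseval (hherm : s.IsHermitian) (hs : s * s = 1) (hdiag : s.IsDiag) :
    ∑ c : G t, Complex.normSq (F s c) = 1 := by
  have key : ∑ c : G t, (F s c * star (F s c)) = 1 := by
    simp only [F, star_mul', star_sum, star_inv₀, star_natCast, star_χ]
    have expand : ∀ c : G t,
        ((Fintype.card (G t) : ℂ)⁻¹ * ∑ j : G t, s j j * χ c j) *
          ((Fintype.card (G t) : ℂ)⁻¹ * ∑ j : G t, star (s j j) * χ c j)
        = (Fintype.card (G t) : ℂ)⁻¹ * (Fintype.card (G t) : ℂ)⁻¹ *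
            ∑ j : G t, ∑ j' : G t, s j j * star (s j' j') * (χ c j * χ c j') := by
      intro c
      rw [mul_mul_mul_comm, Finset.sum_mul_sum]
      congr 1
      exact Finset.sum_congr rfl fun j _ => Finset.sum_congr rfl fun j' _ => by ring
    simp only [expand]
    rw [← Finset.mul_sum, Finset.sum_comm]
    have inner : ∀ j : G t, ∑ c : G t, ∑ j' : G t, s j j * star (s j' j') * (χ c j * χ c j')
        = s j j * star (s j j) * (Fintype.card (G t) : ℂ) := by
      intro j
      rw [Finset.sum_comm]
      have : ∀ j' : G t, ∑ c : G t, s j j * star (s j' j') * (χ c j * χ c j')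
          = s j j * star (s j' j') * (if j = j' then (Fintype.card (G t) : ℂ) else 0) := by
        intro j'
        rw [← Finset.mul_sum, sum_χ_mul']
      rw [Finset.sum_congr rfl (fun j' _ => this j')]
      simp only [mul_ite, mul_zero]
      rw [Finset.sum_ite_eq Finset.univ j
        (fun j' => s j j * star (s j' j') * (Fintype.card (G t) : ℂ)),
        if_pos (Finset.mem_univ j)]
    rw [Finset.sum_congr rfl (fun j _ => inner j)]
    simp only [diag_mul_star hherm hs hdiag, one_mul]
    rw [Finset.sum_const, Finset.card_univ, nsmul_eq_mul]
    field_simp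
  have hl : ∀ z : ℂ, z * star z = (Complex.normSq z : ℂ) := fun z => by
    rw [Complex.star_def, Complex.mul_conj]
  simp only [hl] at key
  exact_mod_cast key

lemma cover (hherm : s.IsHermitian) (hs : s * s = 1) (hdiag : s.IsDiag) :
    1 ≤ ∑ a ∈ SS t, ∑ b ∈ SS t, Complex.normSq (F s (a + b)) := by
  set g : G t × G t → ℝ := fun q => Complex.normSq (F s (q.1 + q.2)) with hg
  have hι : Function.Injective (fun c : G t => (((c.1, (0 : Fin t → ZMod 2)) : G t), (((0 : Fin t → ZMod 2), c.2) : G t))) := by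
    intro c c' h
    simp only [Prod.mk.injEq] at h
    exact Prod.ext h.1.1 h.2.2
  have himg : (Finset.univ.image (fun c : G t => ((c.1, 0), ((0 : Fin t → ZMod 2), c.2))))
      ⊆ SS t ×ˢ SS t := by
    intro q hq
    simp only [Finset.mem_image, Finset.mem_univ, true_and] at hq
    obtain ⟨c, rfl⟩ := hq
    simp [Finset.mem_product, SS]
  calc (1 : ℝ) = ∑ c : G t, Complex.normSq (F s c) := (parseval hherm hs hdiag).symm
    _ = ∑ c : G t, g ((c.1, 0), ((0 : Fin t → ZMod 2), c.2)) := by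
        refine Finset.sum_congr rfl fun c _ => ?_
        simp only [hg]
        congr 2
        exact (Prod.ext (by simp) (by simp)).symm
    _ = ∑ q ∈ Finset.univ.image (fun c : G t => ((c.1, 0), ((0 : Fin t → ZMod 2), c.2))), g q := by
        rw [Finset.sum_image (g := fun c : G t => (((c.1, (0 : Fin t → ZMod 2)) : G t), (((0 : Fin t → ZMod 2), c.2) : G t)))
          (f := g) (fun c _ c' _ h => hι h)]
    _ ≤ ∑ q ∈ SS t ×ˢ SS t, g q := by
        refine Finset.sum_le_sum_of_subset_of_nonneg himg fun q _ _ => Complex.normSq_nonneg _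
    _ = ∑ a ∈ SS t, ∑ b ∈ SS t, Complex.normSq (F s (a + b)) := by rw [Finset.sum_product]

lemma pigeon (hherm : s.IsHermitian) (hs : s * s = 1) (hdiag : s.IsDiag) :
    ∃ a ∈ SS t, (1 : ℝ) / ((SS t).card) ≤ ∑ b ∈ SS t, Complex.normSq (F s (a + b)) := by
  by_contra h
  push_neg at h
  have hlt : ∑ a ∈ SS t, ∑ b ∈ SS t, Complex.normSq (F s (a + b))
      < ∑ a ∈ SS t, (1 : ℝ) / ((SS t).card) :=
    Finset.sum_lt_sum_of_nonempty ⟨0, zero_mem_SS⟩ h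
  rw [Finset.sum_const, nsmul_eq_mul] at hlt
  rw [mul_one_div, div_self (Nat.cast_ne_zero.mpr SS_card_pos.ne' : ((SS t).card : ℝ) ≠ 0)] at hlt
  exact absurd (cover hherm hs hdiag) (not_le.mpr hlt)

end Symmetry

end PSP


namespace PSP

lemma norm_sq_eq_normSq (z : ℂ) : ‖z‖ ^ 2 = Complex.normSq z := by
  rw [Complex.sq_norm]

lemma main_G {t : ℕ} (s : Matrix (G t) (G t) ℂ) (hherm : s.IsHermitian)
    (hs : s * s = 1) (hdiag : s.IsDiag) :
    ∃ a : G t,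
      (Fintype.card (G t) : ℝ) * (1 / ((SS t).card : ℝ))
        ≤ ∑ g : G t, Complex.normSq (((p t * s * p t).mulVec (χ a)) g) := by
  obtain ⟨a, ha, hge⟩ := pigeon hherm hs hdiag
  refine ⟨a, ?_⟩
  rw [w_eq hdiag a ha]
  calc (Fintype.card (G t) : ℝ) * (1 / ((SS t).card : ℝ))
      ≤ (Fintype.card (G t) : ℝ) * ∑ b ∈ SS t, Complex.normSq (F s (a + b)) :=
        mul_le_mul_of_nonneg_left hge (Nat.cast_nonneg _)
    _ = ∑ g : G t, Complex.normSq ((fun i => ∑ b ∈ SS t, F s (a + b) * χ b i) g) :=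
        (sum_normSq_w (fun b => F s (a + b))).symm

lemma p_diag_re {t : ℕ} (g : G t) :
    (p t g g).re = ((SS t).card : ℝ) / (Fintype.card (G t) : ℝ) := by
  rw [p_diag]
  have h : ((SS t).card : ℂ) * ((Fintype.card (G t) : ℂ))⁻¹
      = (((((SS t).card : ℝ)) / ((Fintype.card (G t) : ℝ)) : ℝ) : ℂ) := by
    push_cast
    ring
  rw [h, Complex.ofReal_re]

lemma numeric {C Mr Nr R : ℝ} (hM0 : 0 < Mr) (hNr0 : 0 < Nr) (hC : 0 ≤ C)
    (key : C ^ 2 * Mr ^ 3 ≤ Nr ^ 2) (hR : Nr * (1 / Mr) ≤ R) :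
    C * (Mr / Nr) * Real.sqrt Nr ≤ Real.sqrt R := by
  have lhs_eq : C * (Mr / Nr) * Real.sqrt Nr = Real.sqrt ((C * (Mr / Nr)) ^ 2 * Nr) := by
    rw [Real.sqrt_mul (sq_nonneg _), Real.sqrt_sq (by positivity)]
  rw [lhs_eq]
  apply Real.sqrt_le_sqrt
  refine le_trans ?_ hR
  rw [mul_one_div, le_div_iff₀ hM0]
  have h : (C * (Mr / Nr)) ^ 2 * Nr * Mr = C ^ 2 * Mr ^ 3 / Nr := by
    field_simp
  rw [h, div_le_iff₀ hNr0]
  calc C ^ 2 * Mr ^ 3 ≤ Nr ^ 2 := key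
    _ = Nr * Nr := sq Nr

lemma numeric_key {C : ℝ} {k t : ℕ} (ht : t = k + 3) (hk : C ^ 2 < 2 ^ k)
    {Mr : ℝ} (hMle : Mr ≤ (2 : ℝ) ^ (t + 1)) (hM0 : 0 < Mr) :
    C ^ 2 * Mr ^ 3 ≤ ((2 : ℝ) ^ t * (2 : ℝ) ^ t) ^ 2 := by
  have h1 : C ^ 2 * Mr ^ 3 ≤ (2 : ℝ) ^ k * ((2 : ℝ) ^ (t + 1)) ^ 3 :=
    mul_le_mul hk.le (pow_le_pow_left₀ hM0.le hMle 3) (by positivity) (by positivity)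
  have h2 : (2 : ℝ) ^ k * ((2 : ℝ) ^ (t + 1)) ^ 3 = (2 : ℝ) ^ (k + 3 * (t + 1)) := by
    rw [← pow_mul, ← pow_add]
    congr 1
    omega
  have h4 : ((2 : ℝ) ^ t * (2 : ℝ) ^ t) ^ 2 = (2 : ℝ) ^ (4 * t) := by
    rw [← pow_add, ← pow_mul]
    congr 1
    omega
  have h3 : k + 3 * (t + 1) = 4 * t := by omega
  rw [h4, ← h3]
  exact h2 ▸ h1

end PSP

open PSP in
theorem exists_projection_psp_norm_ge_const_mul_delta (C : ℝ) (hC : 0 < C) :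
    ∃ (n : ℕ) (_ : 0 < n) (p : Matrix (Fin n) (Fin n) ℂ),
      p.IsHermitian ∧ p * p = p ∧
      ∃ δ : ℝ, IsGreatest (Set.range fun i : Fin n => (p i i).re) δ ∧ 0 < δ ∧
        ∀ s : Matrix (Fin n) (Fin n) ℂ, s.IsHermitian → s * s = 1 → s.IsDiag →
          ‖Matrix.toEuclideanCLM (𝕜 := ℂ) (p * s * p)‖ ≥ C * δ := by
  obtain ⟨k, hk⟩ := pow_unbounded_of_one_lt (C ^ 2) (one_lt_two (α := ℝ))
  have ht : k + 3 = k + 3 := rfl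
  generalize htt : k + 3 = t at *
  have hn0 : 0 < Fintype.card (G t) := Fintype.card_pos
  have hNr0 : (0 : ℝ) < (Fintype.card (G t) : ℝ) := by exact_mod_cast hn0
  have hM0 : (0 : ℝ) < (((SS t).card : ℝ)) := by exact_mod_cast SS_card_pos
  set e := Fintype.equivFin (G t) with he
  refine ⟨Fintype.card (G t), hn0, (p t).submatrix e.symm e.symm,
    p_herm.submatrix _, ?_, ?_⟩
  · rw [Matrix.submatrix_mul_equiv, p_mul_p]
  refine ⟨((SS t).card : ℝ) / (Fintype.card (G t) : ℝ),
    ⟨⟨⟨0, hn0⟩, p_diag_re _⟩, ?_⟩,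
    div_pos hM0 hNr0, ?_⟩
  · rintro y ⟨i, rfl⟩
    exact le_of_eq (p_diag_re _)
  intro s' hherm' hs' hdiag'
  have hherm : (s'.submatrix e e).IsHermitian := hherm'.submatrix _
  have hs2 : s'.submatrix e e * s'.submatrix e e = 1 := by
    rw [Matrix.submatrix_mul_equiv, hs', Matrix.submatrix_one_equiv]
  have hdiag : (s'.submatrix e e).IsDiag := by
    intro i j hij
    exact hdiag' (fun hh => hij (e.injective hh))
  obtain ⟨a, hNorm⟩ := main_G (s'.submatrix e e) hherm hs2 hdiag
  have hs'' : s' = (s'.submatrix e e).submatrix e.symm e.symm := by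
    rw [Matrix.submatrix_submatrix, Equiv.self_comp_symm, Matrix.submatrix_id_id]
  have hsub : (p t).submatrix e.symm e.symm * s' * (p t).submatrix e.symm e.symm
      = (p t * s'.submatrix e e * p t).submatrix e.symm e.symm := by
    conv_lhs => rw [hs'']
    rw [Matrix.submatrix_mul_equiv, Matrix.submatrix_mul_equiv]
  set w : G t → ℂ := (p t * s'.submatrix e e * p t).mulVec (χ a) with hw
  set x : EuclideanSpace ℂ (Fin (Fintype.card (G t))) :=
    (WithLp.equiv 2 (Fin (Fintype.card (G t)) → ℂ)).symm (fun i => χ a (e.symm i)) with hx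
  set T := Matrix.toEuclideanCLM (𝕜 := ℂ)
    ((p t).submatrix e.symm e.symm * s' * (p t).submatrix e.symm e.symm) with hT
  have hTx : T x = (WithLp.equiv 2 (Fin (Fintype.card (G t)) → ℂ)).symm (w ∘ e.symm) := by
    rw [hT, hx, hsub, WithLp.equiv_symm_apply, Matrix.toEuclideanCLM_toLp]
    congr 1
    rw [Matrix.submatrix_mulVec_equiv]
    have hcomp : ((fun i => χ a (e.symm i)) ∘ ⇑e.symm.symm) = χ a := by
      funext g
      simp
    rw [hcomp, hw]
  have hxnorm : ‖x‖ = Real.sqrt (Fintype.card (G t)) := by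
    rw [hx, EuclideanSpace.norm_eq]
    congr 1
    have hterm : ∀ i : Fin (Fintype.card (G t)),
        ‖(WithLp.equiv 2 (Fin (Fintype.card (G t)) → ℂ)).symm (fun i => χ a (e.symm i)) i‖ ^ 2
          = 1 := fun i => by
      rw [show (WithLp.equiv 2 (Fin (Fintype.card (G t)) → ℂ)).symm
          (fun i => χ a (e.symm i)) i = χ a (e.symm i) from rfl, χ_norm, one_pow]
    rw [Finset.sum_congr rfl (fun i _ => hterm i), Finset.sum_const, Finset.card_univ,
      Fintype.card_fin, nsmul_eq_mul, mul_one]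
  have hTxnorm : Real.sqrt ((Fintype.card (G t) : ℝ) * (1 / ((SS t).card : ℝ))) ≤ ‖T x‖ := by
    rw [hTx, EuclideanSpace.norm_eq]
    apply Real.sqrt_le_sqrt
    have hterm : ∀ i : Fin (Fintype.card (G t)),
        ‖(WithLp.equiv 2 (Fin (Fintype.card (G t)) → ℂ)).symm (w ∘ e.symm) i‖ ^ 2
          = Complex.normSq (w (e.symm i)) := fun i => by
      rw [show (WithLp.equiv 2 (Fin (Fintype.card (G t)) → ℂ)).symm (w ∘ e.symm) i
          = w (e.symm i) from rfl, norm_sq_eq_normSq]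
    rw [Finset.sum_congr rfl (fun i _ => hterm i),
      Equiv.sum_comp e.symm (fun g => Complex.normSq (w g))]
    exact hNorm
  have hMle : (((SS t).card : ℝ)) ≤ (2 : ℝ) ^ (t + 1) := by
    exact_mod_cast Nat.cast_le.mpr (SS_card_le (t := t))
  have hNreq : (Fintype.card (G t) : ℝ) = (2 : ℝ) ^ t * (2 : ℝ) ^ t := by
    rw [card_G]
    push_cast
    ring
  have key : C ^ 2 * (((SS t).card : ℝ)) ^ 3 ≤ ((Fintype.card (G t) : ℝ)) ^ 2 := by
    rw [hNreq]
    exact numeric_key htt.symm hk hMle hM0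
  have hchain : C * (((SS t).card : ℝ) / (Fintype.card (G t) : ℝ)) * ‖x‖ ≤ ‖T x‖ := by
    rw [hxnorm]
    exact (numeric hM0 hNr0 hC.le key le_rfl).trans hTxnorm
  have hfinal := T.le_opNorm x
  have hxpos : 0 < ‖x‖ := by rw [hxnorm]; exact Real.sqrt_pos.mpr hNr0
  rw [ge_iff_le]
  exact le_of_mul_le_mul_right (le_trans hchain hfinal) hxpos
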